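/- arXiv:2312.09048 — 4 statements merged into one kernel-verified Lean document; each statement's English description precedes it below -/
import Mathlib

section
/- Let w > 1 and let a < b be real numbers satisfying a - tanh(w·a) > b - tanh(w·b). Then: (set) for every x ∈ [-1,1] and every real v with v ≥ w·(b+1), tanh(w·x + v) ≥ tanh(w·b); (reset) for every x ∈ [-1,1] and every v with v ≤ w·(a-1), tanh(w·x + v) ≤ tanh(w·a); (read-high) for every x ∈ [tanh(w·b), 1] and every v with w·(b - tanh(w·b)) ≤ v ≤ w·(a - tanh(w·a)), tanh(w·x + v) ≥ tanh(w·b); (read-low) for every x ∈ [-1, tanh(w·a)] and every v with w·(b - tanh(w·b)) ≤ v ≤ w·(a - tanh(w·a)), tanh(w·x + v) ≤ tanh(w·a). Moreover tanh(w·a) < tanh(w·b), w·(a-1) < w·(b - tanh(w·b)), and w·(a - tanh(w·a)) < w·(b+1), so the state intervals X_low = [-1, tanh(w·a)] and X_high = [tanh(w·b), 1] are disjoint and the three input intervals (-∞, w·(a-1)], [w·(b - tanh(w·b)), w·(a - tanh(w·a))], [w·(b+1), +∞) are pairwise disjoint closed intervals of nonzero length. -/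
open Real

private lemma tanh_formula (x : ℝ) : Real.tanh x = 1 - 2 / (Real.exp (2 * x) + 1) := by
  have h1 : Real.exp x > 0 := Real.exp_pos x
  have h2 : Real.exp (2 * x) = Real.exp x * Real.exp x := by
    rw [show (2:ℝ) * x = x + x by ring, Real.exp_add]
  rw [Real.tanh_eq_sinh_div_cosh, Real.sinh_eq, Real.cosh_eq, Real.exp_neg, h2]
  have h3 : Real.exp x * Real.exp x + 1 > 0 := by positivity
  field_simp
  ring

private lemma tanh_mono : Monotone Real.tanh := by
  intro x y hxy
  rw [tanh_formula, tanh_formula]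
  have h1 : (0:ℝ) < Real.exp (2 * x) + 1 := by positivity
  have h2 : Real.exp (2 * x) ≤ Real.exp (2 * y) := Real.exp_le_exp.mpr (by linarith)
  have : 2 / (Real.exp (2 * y) + 1) ≤ 2 / (Real.exp (2 * x) + 1) := by gcongr
  linarith

private lemma tanh_lt_one' (x : ℝ) : Real.tanh x < 1 := by
  rw [tanh_formula]
  have h1 : (0:ℝ) < Real.exp (2 * x) + 1 := by positivity
  have : 0 < 2 / (Real.exp (2 * x) + 1) := by positivity
  linarith

private lemma neg_one_lt_tanh' (x : ℝ) : -1 < Real.tanh x := by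
  rw [tanh_formula]
  have h0 : (0:ℝ) < Real.exp (2 * x) := Real.exp_pos _
  have h1 : (0:ℝ) < Real.exp (2 * x) + 1 := by positivity
  have : 2 / (Real.exp (2 * x) + 1) < 2 := by
    rw [div_lt_iff₀ h1]; linarith
  linarith

theorem stmt1 (w a b : ℝ) (hw : 1 < w) (hab : a < b)
    (hcond : a - tanh (w * a) > b - tanh (w * b)) :
    (∀ x ∈ Set.Icc (-1 : ℝ) 1, ∀ v : ℝ, w * (b + 1) ≤ v →
      tanh (w * b) ≤ tanh (w * x + v)) ∧
    (∀ x ∈ Set.Icc (-1 : ℝ) 1, ∀ v : ℝ, v ≤ w * (a - 1) →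
      tanh (w * x + v) ≤ tanh (w * a)) ∧
    (∀ x ∈ Set.Icc (tanh (w * b)) 1, ∀ v : ℝ,
      w * (b - tanh (w * b)) ≤ v → v ≤ w * (a - tanh (w * a)) →
      tanh (w * b) ≤ tanh (w * x + v)) ∧
    (∀ x ∈ Set.Icc (-1 : ℝ) (tanh (w * a)), ∀ v : ℝ,
      w * (b - tanh (w * b)) ≤ v → v ≤ w * (a - tanh (w * a)) →
      tanh (w * x + v) ≤ tanh (w * a)) ∧
    tanh (w * a) < tanh (w * b) ∧
    w * (a - 1) < w * (b - tanh (w * b)) ∧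
    w * (b - tanh (w * b)) < w * (a - tanh (w * a)) ∧
    w * (a - tanh (w * a)) < w * (b + 1) ∧
    Disjoint (Set.Icc (-1 : ℝ) (tanh (w * a))) (Set.Icc (tanh (w * b)) 1) ∧
    Disjoint (Set.Iic (w * (a - 1)))
      (Set.Icc (w * (b - tanh (w * b))) (w * (a - tanh (w * a)))) ∧
    Disjoint (Set.Iic (w * (a - 1))) (Set.Ici (w * (b + 1))) ∧
    Disjoint (Set.Icc (w * (b - tanh (w * b))) (w * (a - tanh (w * a))))
      (Set.Ici (w * (b + 1))) := by
  have hw0 : 0 < w := by linarith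
  have hta1 : -1 < tanh (w * a) := neg_one_lt_tanh' _
  have htb1 : tanh (w * b) < 1 := tanh_lt_one' _
  have hta1' : tanh (w * a) < 1 := tanh_lt_one' _
  have htb1' : -1 < tanh (w * b) := neg_one_lt_tanh' _
  have hmono : tanh (w * a) ≤ tanh (w * b) :=
    tanh_mono (by nlinarith)
  have hlt : tanh (w * a) < tanh (w * b) := by
    rcases lt_or_eq_of_le hmono with h | h
    · exact h
    · exfalso; rw [h] at hcond; linarith
  have h6 : w * (a - 1) < w * (b - tanh (w * b)) := by nlinarith
  have h7 : w * (b - tanh (w * b)) < w * (a - tanh (w * a)) := by nlinarith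
  have h8 : w * (a - tanh (w * a)) < w * (b + 1) := by nlinarith
  refine ⟨?_, ?_, ?_, ?_, hlt, h6, h7, h8, ?_, ?_, ?_, ?_⟩
  · rintro x ⟨hx1, hx2⟩ v hv
    exact tanh_mono (by nlinarith)
  · rintro x ⟨hx1, hx2⟩ v hv
    exact tanh_mono (by nlinarith)
  · rintro x ⟨hx1, hx2⟩ v hv1 hv2
    exact tanh_mono (by nlinarith)
  · rintro x ⟨hx1, hx2⟩ v hv1 hv2
    exact tanh_mono (by nlinarith)
  · rw [Set.disjoint_left]
    rintro x ⟨_, h2⟩ ⟨h3, _⟩; linarith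
  · rw [Set.disjoint_left]
    rintro x h1 ⟨h3, _⟩
    rw [Set.mem_Iic] at h1; linarith
  · rw [Set.disjoint_left]
    rintro x h1 h2
    rw [Set.mem_Iic] at h1; rw [Set.mem_Ici] at h2; linarith
  · rw [Set.disjoint_left]
    rintro x ⟨_, h2⟩ h3
    rw [Set.mem_Ici] at h3; linarith
end

section
/- Let w > 0 be a real number, let (u_n)_{n ≥ 1} be a convergent sequence of real numbers, let x_0 ∈ [-1, +1], and define x_n = sgn(w·x_{n-1} + u_n) for every n ≥ 1, where sgn(t) = +1 if t ≥ 0 and sgn(t) = -1 if t < 0. Then the sequence (x_n)_{n ≥ 0} is convergent. -/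
/-- The sign function with the convention `sgn 0 = 1`:
`sgn t = +1` for `t ≥ 0` and `sgn t = -1` for `t < 0`. -/
noncomputable def sgn (t : ℝ) : ℝ := if 0 ≤ t then 1 else -1

lemma sgn_of_nonneg {t : ℝ} (h : 0 ≤ t) : sgn t = 1 := if_pos h

lemma sgn_of_neg {t : ℝ} (h : t < 0) : sgn t = -1 := if_neg (not_le.2 h)

lemma const_from {x : ℕ → ℝ} {M : ℕ} {c : ℝ} (h0 : x M = c)
    (hstep : ∀ n ≥ M, x n = c → x (n + 1) = c) : ∀ n ≥ M, x n = c := by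
  intro n hn
  induction n, hn using Nat.le_induction with
  | base => exact h0
  | succ n hn ih => exact hstep n hn ih

theorem stmt3 (w : ℝ) (hw : 0 < w) (u x : ℕ → ℝ)
    (hu : ∃ l : ℝ, Filter.Tendsto u Filter.atTop (nhds l))
    (hx0 : x 0 ∈ Set.Icc (-1 : ℝ) 1)
    (hrec : ∀ n : ℕ, x (n + 1) = sgn (w * x n + u (n + 1))) :
    ∃ l : ℝ, Filter.Tendsto x Filter.atTop (nhds l) := by
  obtain ⟨l, hl⟩ := hu
  -- it suffices that x is eventually constant
  suffices h : ∃ N : ℕ, ∃ c : ℝ, ∀ n ≥ N, x n = c by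
    obtain ⟨N, c, hc⟩ := h
    exact ⟨c, Filter.Tendsto.congr'
      (Filter.eventually_atTop.2 ⟨N, fun n hn => (hc n hn).symm⟩) tendsto_const_nhds⟩
  have hx1 : ∀ n : ℕ, x (n + 1) = 1 ∨ x (n + 1) = -1 := by
    intro n; rw [hrec n]; unfold sgn; split <;> simp
  have hb : ∀ n, -1 ≤ x n ∧ x n ≤ 1 := by
    intro n
    cases n with
    | zero => exact ⟨hx0.1, hx0.2⟩
    | succ m => rcases hx1 m with h | h <;> rw [h] <;> norm_num
  rcases lt_trichotomy l w with h1 | h1 | h1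
  · rcases lt_trichotomy l (-w) with h2 | h2 | h2
    · -- l < -w : eventually x = -1
      obtain ⟨N, hN⟩ := Metric.tendsto_atTop.1 hl (-w - l) (by linarith)
      refine ⟨N + 1, -1, ?_⟩
      intro n hn
      obtain ⟨m, rfl⟩ := Nat.exists_eq_add_of_le hn
      have hu' : u (N + m + 1) < -w := by
        have := hN (N + m + 1) (by omega)
        rw [Real.dist_eq] at this
        have := abs_lt.1 this
        linarith [this.2]
      have : N + 1 + m = (N + m) + 1 := by omega
      rw [this, hrec (N + m)]
      apply sgn_of_neg
      have hx := (hb (N + m)).2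
      nlinarith [hu']
    · -- l = -w : -1 is absorbing
      obtain ⟨N, hN⟩ := Metric.tendsto_atTop.1 hl w hw
      have huneg : ∀ n ≥ N, u n < 0 := by
        intro n hn
        have := hN n hn
        rw [Real.dist_eq] at this
        have := abs_lt.1 this
        linarith [this.2]
      have habs : ∀ n ≥ N, x n = -1 → x (n + 1) = -1 := by
        intro n hn hx
        rw [hrec n, hx]
        apply sgn_of_neg
        have := huneg (n + 1) (by omega)
        nlinarith
      by_cases hc : ∃ m ≥ N, x m = -1
      · obtain ⟨m, hm, hxm⟩ := hc
        exact ⟨m, -1, const_from hxm (fun n hn h => habs n (le_trans hm hn) h)⟩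
      · push_neg at hc
        refine ⟨N + 1, 1, ?_⟩
        intro n hn
        have hne := hc n (by omega)
        obtain ⟨m, rfl⟩ := Nat.exists_eq_add_of_le hn
        rcases hx1 (N + m) with h | h
        · have : N + 1 + m = (N + m) + 1 := by omega
          rw [this]; exact h
        · exact absurd (by rw [show N + 1 + m = (N + m) + 1 by omega]; exact h) hne
    · -- -w < l < w : every state absorbing
      obtain ⟨N, hN⟩ := Metric.tendsto_atTop.1 hl (min (w - l) (l + w)) (by
        apply lt_min <;> linarith)
      have hub : ∀ n ≥ N, -w < u n ∧ u n < w := by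
        intro n hn
        have := hN n hn
        rw [Real.dist_eq] at this
        have h3 := abs_lt.1 this
        have := min_le_left (w - l) (l + w)
        have := min_le_right (w - l) (l + w)
        constructor <;> linarith [h3.1, h3.2]
      have hstep : ∀ n ≥ N + 1, x (n + 1) = x n := by
        intro n hn
        obtain ⟨m, rfl⟩ : ∃ m, n = m + 1 := ⟨n - 1, by omega⟩
        have hu' := hub (m + 1 + 1) (by omega)
        rcases hx1 m with h | h <;> rw [hrec (m+1), h]
        · rw [sgn_of_nonneg (by nlinarith [hu'.1])]
        · rw [sgn_of_neg (by nlinarith [hu'.2])]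
      exact ⟨N + 1, x (N + 1), const_from rfl (fun n hn h => by rw [hstep n hn, h])⟩
  · -- l = w : 1 is absorbing
    obtain ⟨N, hN⟩ := Metric.tendsto_atTop.1 hl w hw
    have hupos : ∀ n ≥ N, 0 < u n := by
      intro n hn
      have := hN n hn
      rw [Real.dist_eq] at this
      have := abs_lt.1 this
      linarith [this.1]
    have habs : ∀ n ≥ N, x n = 1 → x (n + 1) = 1 := by
      intro n hn hx
      rw [hrec n, hx]
      apply sgn_of_nonneg
      have := hupos (n + 1) (by omega)
      nlinarith
    by_cases hc : ∃ m ≥ N, x m = 1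
    · obtain ⟨m, hm, hxm⟩ := hc
      exact ⟨m, 1, const_from hxm (fun n hn h => habs n (le_trans hm hn) h)⟩
    · push_neg at hc
      refine ⟨N + 1, -1, ?_⟩
      intro n hn
      have hne := hc n (by omega)
      obtain ⟨m, rfl⟩ := Nat.exists_eq_add_of_le hn
      rcases hx1 (N + m) with h | h
      · exact absurd (by rw [show N + 1 + m = (N + m) + 1 by omega]; exact h) hne
      · rw [show N + 1 + m = (N + m) + 1 by omega]; exact h
  · -- l > w : eventually x = 1
    obtain ⟨N, hN⟩ := Metric.tendsto_atTop.1 hl (l - w) (by linarith)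
    refine ⟨N + 1, 1, ?_⟩
    intro n hn
    obtain ⟨m, rfl⟩ := Nat.exists_eq_add_of_le hn
    have hu' : w < u (N + m + 1) := by
      have := hN (N + m + 1) (by omega)
      rw [Real.dist_eq] at this
      have := abs_lt.1 this
      linarith [this.1]
    rw [show N + 1 + m = (N + m) + 1 by omega, hrec (N + m)]
    apply sgn_of_nonneg
    have hx := (hb (N + m)).1
    nlinarith [hu']
end

section
/- Let w < -1 and let a < b be real numbers satisfying a + tanh(w·a) > b + tanh(w·b). Then: (toggle low→high) for every x ∈ [-1, tanh(w·b)] and every real v with w·(a - tanh(w·b)) ≤ v ≤ w·(b - tanh(w·a)), tanh(w·x + v) ≥ tanh(w·a); (toggle high→low) for every x ∈ [tanh(w·a), 1] and every v with w·(a - tanh(w·b)) ≤ v ≤ w·(b - tanh(w·a)), tanh(w·x + v) ≤ tanh(w·b); (set) for every x ∈ [-1,1] and every v with v ≥ w·(a-1), tanh(w·x + v) ≥ tanh(w·a); (reset) for every x ∈ [-1,1] and every v with v ≤ w·(b+1), tanh(w·x + v) ≤ tanh(w·b). Moreover tanh(w·b) < tanh(w·a), w·(b+1) < w·(a - tanh(w·b)),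 w·(a - tanh(w·b)) < w·(b - tanh(w·a)), and w·(b - tanh(w·a)) < w·(a-1), so the state intervals X_low = [-1, tanh(w·b)] and X_high = [tanh(w·a), 1] are disjoint and the three input intervals are pairwise disjoint closed intervals of nonzero length. -/
open Real

lemma my_tanh_lt_tanh {x y : ℝ} (h : x < y) : tanh x < tanh y := by
  rw [Real.tanh_eq_sinh_div_cosh, Real.tanh_eq_sinh_div_cosh,
    div_lt_div_iff₀ (Real.cosh_pos x) (Real.cosh_pos y)]
  have hs : Real.sinh (x - y) < 0 := Real.sinh_neg_iff.2 (by linarith)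
  rw [Real.sinh_sub] at hs
  linarith

lemma my_tanh_le_tanh {x y : ℝ} (h : x ≤ y) : tanh x ≤ tanh y := by
  rcases eq_or_lt_of_le h with rfl | h
  · exact le_rfl
  · exact (my_tanh_lt_tanh h).le

lemma my_tanh_lt_one (x : ℝ) : tanh x < 1 := by
  rw [Real.tanh_eq_sinh_div_cosh, div_lt_one (Real.cosh_pos x)]
  exact Real.sinh_lt_cosh x

lemma my_neg_one_lt_tanh (x : ℝ) : -1 < tanh x := by
  rw [Real.tanh_eq_sinh_div_cosh, lt_div_iff₀ (Real.cosh_pos x)]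
  have := Real.exp_pos x
  have h := Real.cosh_add_sinh x
  linarith

theorem stmt6 (w a b : ℝ) (hw : w < -1) (hab : a < b)
    (hcond : a + tanh (w * a) > b + tanh (w * b)) :
    (∀ x ∈ Set.Icc (-1 : ℝ) (tanh (w * b)), ∀ v : ℝ,
      w * (a - tanh (w * b)) ≤ v → v ≤ w * (b - tanh (w * a)) →
      tanh (w * a) ≤ tanh (w * x + v)) ∧
    (∀ x ∈ Set.Icc (tanh (w * a)) 1, ∀ v : ℝ,
      w * (a - tanh (w * b)) ≤ v → v ≤ w * (b - tanh (w * a)) →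
      tanh (w * x + v) ≤ tanh (w * b)) ∧
    (∀ x ∈ Set.Icc (-1 : ℝ) 1, ∀ v : ℝ, w * (a - 1) ≤ v →
      tanh (w * a) ≤ tanh (w * x + v)) ∧
    (∀ x ∈ Set.Icc (-1 : ℝ) 1, ∀ v : ℝ, v ≤ w * (b + 1) →
      tanh (w * x + v) ≤ tanh (w * b)) ∧
    tanh (w * b) < tanh (w * a) ∧
    w * (b + 1) < w * (a - tanh (w * b)) ∧
    w * (a - tanh (w * b)) < w * (b - tanh (w * a)) ∧
    w * (b - tanh (w * a)) < w * (a - 1) ∧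
    Disjoint (Set.Icc (-1 : ℝ) (tanh (w * b))) (Set.Icc (tanh (w * a)) 1) ∧
    Disjoint (Set.Iic (w * (b + 1)))
      (Set.Icc (w * (a - tanh (w * b))) (w * (b - tanh (w * a)))) ∧
    Disjoint (Set.Iic (w * (b + 1))) (Set.Ici (w * (a - 1))) ∧
    Disjoint (Set.Icc (w * (a - tanh (w * b))) (w * (b - tanh (w * a))))
      (Set.Ici (w * (a - 1))) := by
  have hwneg : w < 0 := by linarith
  have hta1 : tanh (w * a) < 1 := my_tanh_lt_one _
  have htb1 : -1 < tanh (w * b) := my_neg_one_lt_tanh _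
  have htba : tanh (w * b) < tanh (w * a) :=
    my_tanh_lt_tanh (by nlinarith)
  refine ⟨?_, ?_, ?_, ?_, htba, ?_, ?_, ?_, ?_, ?_, ?_, ?_⟩
  · intro x hx v hv1 hv2
    apply my_tanh_le_tanh
    have hx2 := hx.2
    nlinarith
  · intro x hx v hv1 hv2
    apply my_tanh_le_tanh
    have hx1 := hx.1
    nlinarith
  · intro x hx v hv
    apply my_tanh_le_tanh
    have hx2 := hx.2
    nlinarith
  · intro x hx v hv
    apply my_tanh_le_tanh
    have hx1 := hx.1
    nlinarith
  · nlinarith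
  · nlinarith
  · nlinarith
  · rw [Set.disjoint_left]
    intro t ht1 ht2
    have := ht1.2
    have := ht2.1
    linarith
  · rw [Set.disjoint_left]
    intro t ht1 ht2
    simp only [Set.mem_Iic] at ht1
    have := ht2.1
    nlinarith
  · rw [Set.disjoint_left]
    intro t ht1 ht2
    simp only [Set.mem_Iic] at ht1
    simp only [Set.mem_Ici] at ht2
    nlinarith
  · rw [Set.disjoint_left]
    intro t ht1 ht2
    have := ht1.2
    simp only [Set.mem_Ici] at ht2
    nlinarith
end

section
/- Let w and a be real numbers such that either a > 0 and w > 0, or a < 0 and w < 0; note tanh(w·a) > 0 in both cases. If a > 0 and w > 0, then: for every x ∈ [-1, -tanh(w·a)] and every v ≥ a/tanh(w·a), tanh(w·x·v) ≤ -tanh(w·a); for every x ∈ [-1, -tanh(w·a)] and every v ≤ -a/tanh(w·a), tanh(w·x·v) ≥ tanh(w·a); for every x ∈ [tanh(w·a), 1] and every v ≥ a/tanh(w·a), tanh(w·x·v) ≥ tanh(w·a); for every x ∈ [tanh(w·a), 1] and every v ≤ -a/tanh(w·a), tanh(w·x·v) ≤ -tanh(w·a). If a < 0 and w < 0, then the same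 four conclusions hold with the conditions on v replaced respectively by v ≤ a/tanh(w·a), v ≥ -a/tanh(w·a), v ≤ a/tanh(w·a), v ≥ -a/tanh(w·a). In both cases -tanh(w·a) < tanh(w·a), so the state intervals X_0 = [-1, -tanh(w·a)] and X_1 = [tanh(w·a), 1] are disjoint, and the two input intervals are disjoint. -/
open Real

private lemma tanh_mono_s9 {x y : ℝ} (h : x ≤ y) : Real.tanh x ≤ Real.tanh y := by
  rw [Real.tanh_eq_sinh_div_cosh, Real.tanh_eq_sinh_div_cosh,
    div_le_div_iff₀ (Real.cosh_pos x) (Real.cosh_pos y)]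
  have h1 : Real.sinh (x - y) ≤ 0 := Real.sinh_nonpos_iff.2 (by linarith)
  rw [Real.sinh_sub] at h1
  linarith

private lemma tanh_pos {x : ℝ} (h : 0 < x) : 0 < Real.tanh x := by
  rw [Real.tanh_eq_sinh_div_cosh]
  exact div_pos (Real.sinh_pos_iff.2 h) (Real.cosh_pos x)

theorem stmt9 (w a : ℝ) (h : (0 < a ∧ 0 < w) ∨ (a < 0 ∧ w < 0)) :
    0 < tanh (w * a) ∧
    ((0 < a ∧ 0 < w) →
      (∀ x ∈ Set.Icc (-1 : ℝ) (-tanh (w * a)), ∀ v : ℝ, a / tanh (w * a) ≤ v →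
        tanh (w * x * v) ≤ -tanh (w * a)) ∧
      (∀ x ∈ Set.Icc (-1 : ℝ) (-tanh (w * a)), ∀ v : ℝ, v ≤ -a / tanh (w * a) →
        tanh (w * a) ≤ tanh (w * x * v)) ∧
      (∀ x ∈ Set.Icc (tanh (w * a)) 1, ∀ v : ℝ, a / tanh (w * a) ≤ v →
        tanh (w * a) ≤ tanh (w * x * v)) ∧
      (∀ x ∈ Set.Icc (tanh (w * a)) 1, ∀ v : ℝ, v ≤ -a / tanh (w * a) →
        tanh (w * x * v) ≤ -tanh (w * a)) ∧
      Disjoint (Set.Ici (a / tanh (w * a))) (Set.Iic (-a / tanh (w * a)))) ∧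
    ((a < 0 ∧ w < 0) →
      (∀ x ∈ Set.Icc (-1 : ℝ) (-tanh (w * a)), ∀ v : ℝ, v ≤ a / tanh (w * a) →
        tanh (w * x * v) ≤ -tanh (w * a)) ∧
      (∀ x ∈ Set.Icc (-1 : ℝ) (-tanh (w * a)), ∀ v : ℝ, -a / tanh (w * a) ≤ v →
        tanh (w * a) ≤ tanh (w * x * v)) ∧
      (∀ x ∈ Set.Icc (tanh (w * a)) 1, ∀ v : ℝ, v ≤ a / tanh (w * a) →
        tanh (w * a) ≤ tanh (w * x * v)) ∧
      (∀ x ∈ Set.Icc (tanh (w * a)) 1, ∀ v : ℝ, -a / tanh (w * a) ≤ v →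
        tanh (w * x * v) ≤ -tanh (w * a)) ∧
      Disjoint (Set.Iic (a / tanh (w * a))) (Set.Ici (-a / tanh (w * a)))) ∧
    -tanh (w * a) < tanh (w * a) ∧
    Disjoint (Set.Icc (-1 : ℝ) (-tanh (w * a))) (Set.Icc (tanh (w * a)) 1) := by
  have hwa : 0 < w * a := by rcases h with ⟨ha, hw⟩ | ⟨ha, hw⟩ <;> nlinarith
  set t := Real.tanh (w * a) with ht_def
  have ht : 0 < t := tanh_pos hwa
  have key : ∀ s : ℝ, w * a ≤ s → t ≤ Real.tanh s := fun s hs => tanh_mono_s9 hs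
  have key' : ∀ s : ℝ, s ≤ -(w * a) → Real.tanh s ≤ -t := by
    intro s hs
    have := tanh_mono_s9 hs
    rwa [Real.tanh_neg] at this
  refine ⟨ht, ?_, ?_, by linarith, ?_⟩
  · rintro ⟨ha, hw⟩
    refine ⟨?_, ?_, ?_, ?_, ?_⟩
    · rintro x ⟨hx1, hx2⟩ v hv
      rw [div_le_iff₀ ht] at hv
      have hv0 : 0 ≤ v := by nlinarith
      have hxv : x * v ≤ -a := by nlinarith [mul_le_mul_of_nonneg_right hx2 hv0]
      exact key' _ (by nlinarith [mul_le_mul_of_nonneg_left hxv hw.le])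
    · rintro x ⟨hx1, hx2⟩ v hv
      rw [le_div_iff₀ ht] at hv
      have hv0 : v ≤ 0 := by nlinarith
      have hxv : a ≤ x * v := by nlinarith [mul_le_mul_of_nonpos_right hx2 hv0]
      exact key _ (by nlinarith [mul_le_mul_of_nonneg_left hxv hw.le])
    · rintro x ⟨hx1, hx2⟩ v hv
      rw [div_le_iff₀ ht] at hv
      have hv0 : 0 ≤ v := by nlinarith
      have hxv : a ≤ x * v := by nlinarith [mul_le_mul_of_nonneg_right hx1 hv0]
      exact key _ (by nlinarith [mul_le_mul_of_nonneg_left hxv hw.le])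
    · rintro x ⟨hx1, hx2⟩ v hv
      rw [le_div_iff₀ ht] at hv
      have hv0 : v ≤ 0 := by nlinarith
      have hxv : x * v ≤ -a := by nlinarith [mul_le_mul_of_nonpos_right hx1 hv0]
      exact key' _ (by nlinarith [mul_le_mul_of_nonneg_left hxv hw.le])
    · rw [Set.disjoint_left]
      rintro v hv1 hv2
      simp only [Set.mem_Ici, Set.mem_Iic] at hv1 hv2
      have h1 : 0 < a / t := div_pos ha ht
      have h2 : -a / t < 0 := div_neg_of_neg_of_pos (by linarith) ht
      linarith
  · rintro ⟨ha, hw⟩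
    refine ⟨?_, ?_, ?_, ?_, ?_⟩
    · rintro x ⟨hx1, hx2⟩ v hv
      rw [le_div_iff₀ ht] at hv
      have hv0 : v ≤ 0 := by nlinarith
      have hxv : -a ≤ x * v := by nlinarith [mul_le_mul_of_nonpos_right hx2 hv0]
      exact key' _ (by nlinarith [mul_le_mul_of_nonpos_left hxv hw.le])
    · rintro x ⟨hx1, hx2⟩ v hv
      rw [div_le_iff₀ ht] at hv
      have hv0 : 0 ≤ v := by nlinarith
      have hxv : x * v ≤ a := by nlinarith [mul_le_mul_of_nonneg_right hx2 hv0]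
      exact key _ (by nlinarith [mul_le_mul_of_nonpos_left hxv hw.le])
    · rintro x ⟨hx1, hx2⟩ v hv
      rw [le_div_iff₀ ht] at hv
      have hv0 : v ≤ 0 := by nlinarith
      have hxv : x * v ≤ a := by nlinarith [mul_le_mul_of_nonpos_right hx1 hv0]
      exact key _ (by nlinarith [mul_le_mul_of_nonpos_left hxv hw.le])
    · rintro x ⟨hx1, hx2⟩ v hv
      rw [div_le_iff₀ ht] at hv
      have hv0 : 0 ≤ v := by nlinarith
      have hxv : -a ≤ x * v := by nlinarith [mul_le_mul_of_nonneg_right hx1 hv0]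
      exact key' _ (by nlinarith [mul_le_mul_of_nonpos_left hxv hw.le])
    · rw [Set.disjoint_left]
      rintro v hv1 hv2
      simp only [Set.mem_Ici, Set.mem_Iic] at hv1 hv2
      have h1 : a / t < 0 := div_neg_of_neg_of_pos ha ht
      have h2 : 0 < -a / t := div_pos (by linarith) ht
      linarith
  · rw [Set.disjoint_left]
    rintro x ⟨hx1, hx2⟩ ⟨hx3, hx4⟩
    linarith
end
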